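/- Let k ≥ 1 and w = (w₁,…,w_k) ∈ ℂ^k. There exists a nonzero entire function f : ℂ^k → ℂ satisfying, for every i = 1,…,k and every t ∈ ℂ^k, f(t + e_i) = f(t) and f(t + τ·e_i) = e^{2πi w_i}·f(t) (where e_i is the i-th standard basis vector), if and only if w ∈ Λ^k. -/

import Mathlib

open Complex Filter
open scoped Topology

noncomputable section

/-- The lattice `Λ = ℤτ + ℤ ⊂ ℂ` as a set. -/
def Lam (τ : ℂ) : Set ℂ := {c | ∃ l m : ℤ, c = l * τ + m}

/-- The infinite product `(y;q) = ∏_{j=0}^∞ (1 - y qʲ)`. -/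
def qPoch (y q : ℂ) : ℂ := ∏' j : ℕ, (1 - y * q ^ j)

/-- The first Jacobi theta function
`θ(z,τ) = i e^{πi(τ/4 - z)} (x;q)(q/x;q)(q;q)`, `q = e^{2πiτ}`, `x = e^{2πiz}`. -/
def theta (z τ : ℂ) : ℂ :=
  Complex.I * Complex.exp ((Real.pi : ℂ) * Complex.I * (τ / 4 - z)) *
    qPoch (Complex.exp (2 * (Real.pi : ℂ) * Complex.I * z))
      (Complex.exp (2 * (Real.pi : ℂ) * Complex.I * τ)) *
    qPoch (Complex.exp (2 * (Real.pi : ℂ) * Complex.I * τ) /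
        Complex.exp (2 * (Real.pi : ℂ) * Complex.I * z))
      (Complex.exp (2 * (Real.pi : ℂ) * Complex.I * τ)) *
    qPoch (Complex.exp (2 * (Real.pi : ℂ) * Complex.I * τ))
      (Complex.exp (2 * (Real.pi : ℂ) * Complex.I * τ))

/-- `θ'(z,τ)`, the derivative of `θ` in the `z` variable. -/
def thetaD (z τ : ℂ) : ℂ := deriv (fun u => theta u τ) z

/-- `σ_w(t,τ) = θ(w-t,τ)θ'(0,τ)/(θ(w,τ)θ(t,τ))`. -/
def sigmaW (w t τ : ℂ) : ℂ := theta (w - t) τ * thetaD 0 τ / (theta w τ * theta t τ)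


open MeasureTheory Set AddCircle

lemma fourier_unique (φ : ℝ → ℂ) (hφ : Continuous φ) (hper : ∀ x : ℝ, φ (x + 1) = φ x)
    (hc : ∀ n : ℤ, (∫ x in (0:ℝ)..1, Complex.exp (-(2 * (Real.pi:ℂ) * I * n * x)) * φ x) = 0) :
    ∀ x, φ x = 0 := by
  haveI : Fact (0 < (1:ℝ)) := ⟨one_pos⟩
  have hlift : Continuous (AddCircle.liftIco (1:ℝ) 0 φ) :=
    AddCircle.liftIco_zero_continuous (by rw [← hper 0]; norm_num) hφ.continuousOn
  set h : C(AddCircle (1:ℝ), ℂ) := ⟨AddCircle.liftIco (1:ℝ) 0 φ, hlift⟩ with hh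
  have hcoeff : ∀ n : ℤ, fourierCoeff (h : AddCircle (1:ℝ) → ℂ) n = 0 := by
    intro n
    have h1 : fourierCoeff (AddCircle.liftIco (1:ℝ) 0 φ) n =
        fourierCoeffOn (by norm_num : (0:ℝ) < 0 + 1) φ n := fourierCoeff_liftIco_eq φ n
    have h2 : fourierCoeffOn (by norm_num : (0:ℝ) < 0 + 1) φ n = 0 := by
      rw [fourierCoeffOn_eq_integral]
      simp only [zero_add, sub_zero, one_div_one, one_smul]
      rw [← hc n]
      apply intervalIntegral.integral_congr
      intro x _
      simp only [smul_eq_mul, fourier_coe_apply]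
      congr 1
      push_cast
      ring_nf
    exact h1.trans h2
  have hL : ContinuousMap.toLp (E := ℂ) 2 haarAddCircle ℂ h = 0 := by
    apply fourierBasis.repr.injective
    ext n
    rw [fourierBasis_repr, fourierCoeff_toLp, hcoeff n]
    simp
  have h0 : h = 0 := by
    exact ContinuousMap.toLp_injective _ (hL.trans (map_zero _).symm)
  intro x
  have hx : liftIco (1:ℝ) 0 φ ((Int.fract x : ℝ) : AddCircle (1:ℝ)) = φ (Int.fract x) :=
    liftIco_zero_coe_apply ⟨Int.fract_nonneg x, Int.fract_lt_one x⟩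
  have hφx : φ (Int.fract x) = 0 := by
    rw [← hx]
    have : (h : AddCircle (1:ℝ) → ℂ) = 0 := by rw [h0]; rfl
    exact congrFun this _
  -- φ x = φ (fract x) since φ is 1-periodic, x = fract x + ⌊x⌋
  have hper' : Function.Periodic φ 1 := hper
  have hz := (hper'.zsmul ⌊x⌋) (Int.fract x)
  simp only [zsmul_eq_mul, mul_one] at hz
  rw [← Int.fract_add_floor x, hz, hφx]

lemma one_var (τ : ℂ) (hτ : 0 < τ.im) (w : ℂ) (g : ℂ → ℂ) (hg : Differentiable ℂ g)
    (h1 : ∀ z, g (z + 1) = g z)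
    (h2 : ∀ z, g (z + τ) = Complex.exp (2 * (Real.pi:ℂ) * I * w) * g z)
    (z₀ : ℂ) (hz₀ : g z₀ ≠ 0) : ∃ l m : ℤ, w = l * τ + m := by
  classical
  set e : ℤ → ℂ → ℂ := fun n z => g z * Complex.exp (-(2 * (Real.pi:ℂ) * I * n * z)) with he
  have he_diff : ∀ n, Differentiable ℂ (e n) := fun n =>
    hg.mul ((differentiable_const _ |>.mul differentiable_id).neg.cexp)
  have he_per : ∀ n z, e n (z + 1) = e n z := by
    intro n z
    simp only [he]
    rw [h1]
    congr 1
    have h1' : Complex.exp (-((n:ℂ) * (2 * (Real.pi:ℂ) * I))) = 1 := by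
      rw [show -((n:ℂ) * (2 * (Real.pi:ℂ) * I)) = ((-n : ℤ) : ℂ) * (2 * (Real.pi:ℂ) * I) by push_cast; ring,
        Complex.exp_int_mul_two_pi_mul_I]
    rw [show -(2 * (Real.pi:ℂ) * I * n * (z + 1)) = -(2 * (Real.pi:ℂ) * I * n * z) + -((n:ℂ) * (2 * (Real.pi:ℂ) * I)) by
        ring, Complex.exp_add, h1', mul_one]
  have he_tau : ∀ n z, e n (z + τ) = Complex.exp (2 * (Real.pi:ℂ) * I * (w - n * τ)) * e n z := by
    intro n z
    simp only [he]
    rw [h2, show -(2 * (Real.pi:ℂ) * I * n * (z + τ))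
        = -(2 * (Real.pi:ℂ) * I * n * z) + -(2 * (Real.pi:ℂ) * I * ((n:ℂ) * τ)) by ring, Complex.exp_add,
      show (2 * (Real.pi:ℂ) * I * (w - n * τ)) = 2 * (Real.pi:ℂ) * I * w + -(2 * (Real.pi:ℂ) * I * ((n:ℂ)*τ)) by ring,
      Complex.exp_add]
    ring
  set K : ℤ → ℝ → ℂ := fun n y => ∫ x in (0:ℝ)..1, e n ((x:ℂ) + y * I) with hK
  -- step 1: K constant in y
  have hKconst : ∀ n y₁ y₂, K n y₁ = K n y₂ := by
    intro n y₁ y₂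
    have hrect := Complex.integral_boundary_rect_eq_zero_of_differentiableOn (e n)
      (y₁ * I) (1 + y₂ * I) ((he_diff n).differentiableOn)
    simp only [Complex.mul_I_re, Complex.mul_I_im, Complex.add_re, Complex.one_re,
      Complex.add_im, Complex.one_im, Complex.ofReal_re, Complex.ofReal_im, Complex.ofReal_zero,
      Complex.ofReal_one, neg_zero, zero_add, add_zero] at hrect
    have hvert : (∫ y in y₁..y₂, e n (1 + y * I)) = ∫ y in y₁..y₂, e n (y * I) := by
      apply intervalIntegral.integral_congr
      intro y _
      show e n (1 + (y:ℂ) * I) = e n ((y:ℂ) * I)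
      rw [add_comm (1:ℂ) ((y:ℂ) * I), he_per]
    rw [hvert] at hrect
    simp only [hK]
    linear_combination hrect
  -- step 2: horizontal shift invariance
  have hKshift : ∀ n (s y : ℝ), (∫ x in (0:ℝ)..1, e n ((x:ℂ) + s + y * I)) = K n y := by
    intro n s y
    have hP : Function.Periodic (fun x : ℝ => e n ((x:ℂ) + y * I)) 1 := by
      intro x
      simp only
      push_cast
      rw [show (x:ℂ) + 1 + y * I = ((x:ℂ) + y * I) + 1 by ring, he_per]
    calc (∫ x in (0:ℝ)..1, e n ((x:ℂ) + s + y * I))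
        = ∫ x in (0:ℝ)..1, (fun u : ℝ => e n ((u:ℂ) + y * I)) (x + s) := by
          apply intervalIntegral.integral_congr
          intro x _
          simp only
          push_cast
          ring_nf
      _ = ∫ x in (0:ℝ)+s..1+s, e n ((x:ℂ) + y * I) := by
          exact intervalIntegral.integral_comp_add_right (a := (0:ℝ)) (b := 1)
            (fun u : ℝ => e n ((u:ℂ) + y * I)) s
      _ = K n y := by
          have := hP.intervalIntegral_add_eq s 0
          rw [add_comm (0:ℝ) s]
          simpa [add_comm] using this
  -- step 3: K n y = exp(2πi(w-nτ)) K n y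
  have hKtau : ∀ n y, K n y = Complex.exp (2 * (Real.pi:ℂ) * I * (w - n * τ)) * K n y := by
    intro n y
    have hA : (∫ x in (0:ℝ)..1, e n ((x:ℂ) + y * I + τ))
        = Complex.exp (2 * (Real.pi:ℂ) * I * (w - n * τ)) * K n y := by
      rw [hK]
      rw [← intervalIntegral.integral_const_mul]
      apply intervalIntegral.integral_congr
      intro x _
      exact he_tau n _
    have hB : (∫ x in (0:ℝ)..1, e n ((x:ℂ) + y * I + τ)) = K n y := by
      have hcongr : (∫ x in (0:ℝ)..1, e n ((x:ℂ) + y * I + τ))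
          = ∫ x in (0:ℝ)..1, e n ((x:ℂ) + (τ.re:ℝ) + ((y + τ.im : ℝ):ℂ) * I) := by
        apply intervalIntegral.integral_congr
        intro x _
        show e n ((x:ℂ) + y * I + τ) = e n ((x:ℂ) + (τ.re:ℝ) + ((y + τ.im : ℝ):ℂ) * I)
        congr 1
        nth_rewrite 1 [← Complex.re_add_im τ]
        push_cast
        ring
      rw [hcongr, hKshift n τ.re (y + τ.im), hKconst n (y + τ.im) y]
    exact hB.symm.trans hA
  -- step 4: some K n y₀ is nonzero
  set y₀ : ℝ := z₀.im with hy₀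
  have hKnz : ∃ n : ℤ, K n y₀ ≠ 0 := by
    by_contra hall
    push_neg at hall
    set φ : ℝ → ℂ := fun x => g ((x:ℂ) + y₀ * I) with hφdef
    have hφcont : Continuous φ := hg.continuous.comp (Complex.continuous_ofReal.add continuous_const)
    have hφper : ∀ x : ℝ, φ (x + 1) = φ x := by
      intro x
      simp only [hφdef]
      push_cast
      rw [show (x:ℂ) + 1 + y₀ * I = ((x:ℂ) + y₀ * I) + 1 by ring, h1]
    have hφc : ∀ n : ℤ, (∫ x in (0:ℝ)..1, Complex.exp (-(2 * (Real.pi:ℂ) * I * n * x)) * φ x) = 0 := by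
      intro n
      have hKn : (∫ x in (0:ℝ)..1, e n ((x:ℂ) + y₀ * I)) = 0 := hall n
      have hsplit : (∫ x in (0:ℝ)..1, e n ((x:ℂ) + y₀ * I))
          = Complex.exp (-(2 * (Real.pi:ℂ) * I * n * (y₀ * I))) *
            ∫ x in (0:ℝ)..1, Complex.exp (-(2 * (Real.pi:ℂ) * I * n * x)) * φ x := by
        rw [← intervalIntegral.integral_const_mul]
        apply intervalIntegral.integral_congr
        intro x _
        show e n ((x:ℂ) + y₀ * I) = _
        simp only [he, hφdef]
        rw [show -(2 * (Real.pi:ℂ) * I * n * ((x:ℂ) + y₀ * I))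
          = -(2 * (Real.pi:ℂ) * I * n * (y₀ * I)) + -(2 * (Real.pi:ℂ) * I * n * x) by ring, Complex.exp_add]
        ring
      rw [hsplit] at hKn
      exact (mul_eq_zero.mp hKn).resolve_left (Complex.exp_ne_zero _)
    have := fourier_unique φ hφcont hφper hφc z₀.re
    apply hz₀
    rw [← Complex.re_add_im z₀]
    exact this
  obtain ⟨n, hn⟩ := hKnz
  have hexp1 : Complex.exp (2 * (Real.pi:ℂ) * I * (w - n * τ)) = 1 := by
    have := hKtau n y₀
    have h' : (Complex.exp (2 * (Real.pi:ℂ) * I * (w - n * τ)) - 1) * K n y₀ = 0 := by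
      linear_combination -this
    rcases mul_eq_zero.mp h' with h | h
    · exact sub_eq_zero.mp h
    · exact absurd h hn
  obtain ⟨m, hm⟩ := Complex.exp_eq_one_iff.mp hexp1
  refine ⟨n, m, ?_⟩
  have hπI : (2 * (Real.pi:ℂ) * I) ≠ 0 :=
    mul_ne_zero (mul_ne_zero two_ne_zero (by exact_mod_cast Real.pi_ne_zero)) Complex.I_ne_zero
  have hw : w - n * τ = m := mul_left_cancel₀ hπI (by linear_combination hm)
  linear_combination hw

/-- There is a nonzero entire function on `ℂ^k` with `f(t+eᵢ)=f(t)`,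
`f(t+τeᵢ)=e^{2πiwᵢ}f(t)` for all `i` iff `w ∈ Λ^k`. -/
theorem exists_quasiperiodic_entire_iff_multi (τ : ℂ) (hτ : 0 < τ.im)
    (k : ℕ) (hk : 1 ≤ k) (w : Fin k → ℂ) :
    (∃ f : (Fin k → ℂ) → ℂ, f ≠ 0 ∧ Differentiable ℂ f ∧
      (∀ i : Fin k, ∀ t : Fin k → ℂ, f (t + Pi.single i 1) = f t) ∧
      (∀ i : Fin k, ∀ t : Fin k → ℂ,
        f (t + Pi.single i τ) = Complex.exp (2 * (Real.pi : ℂ) * Complex.I * w i) * f t)) ↔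
    (∀ i : Fin k, w i ∈ Lam τ) := by
  constructor
  · rintro ⟨f, hf0, hfd, hper1, hperτ⟩ i
    obtain ⟨t₀, ht₀⟩ : ∃ t₀, f t₀ ≠ 0 := by
      by_contra hcon
      push_neg at hcon
      exact hf0 (funext hcon)
    set g : ℂ → ℂ := fun z => f (t₀ + Pi.single i (z - t₀ i)) with hgdef
    have hkey : ∀ z : ℂ, (fun z : ℂ => t₀ + Pi.single i (z - t₀ i)) z
        = t₀ + (z - t₀ i) • (Pi.single i (1:ℂ) : Fin k → ℂ) := by
      intro z
      congr 1
      funext j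
      by_cases hj : j = i
      · subst hj; simp
      · simp [Pi.single_apply, hj]
    have hgd : Differentiable ℂ g := by
      apply hfd.comp
      have : (fun z : ℂ => t₀ + Pi.single i (z - t₀ i))
          = fun z : ℂ => t₀ + (z - t₀ i) • (Pi.single i (1:ℂ) : Fin k → ℂ) := funext hkey
      rw [this]
      exact (differentiable_const _).add ((differentiable_id.sub_const _).smul_const _)
    have harg : ∀ (z c : ℂ), t₀ + Pi.single i (z + c - t₀ i)
        = (t₀ + Pi.single i (z - t₀ i)) + Pi.single i c := by
      intro z c
      rw [add_assoc, ← Pi.single_add]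
      congr 2
      ring
    have hg1 : ∀ z, g (z + 1) = g z := by
      intro z
      simp only [hgdef]
      rw [harg z 1, hper1 i]
    have hgτ : ∀ z, g (z + τ) = Complex.exp (2 * (Real.pi:ℂ) * I * w i) * g z := by
      intro z
      simp only [hgdef]
      rw [harg z τ, hperτ i]
    have hgz : g (t₀ i) ≠ 0 := by
      simp only [hgdef, sub_self, Pi.single_zero, add_zero]
      exact ht₀
    exact one_var τ hτ (w i) g hgd hg1 hgτ (t₀ i) hgz
  · intro h
    choose l m hlm using h
    refine ⟨fun t => Complex.exp (2 * (Real.pi:ℂ) * I * ∑ j, (l j : ℂ) * t j), ?_, ?_, ?_, ?_⟩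
    · intro h0
      have := congrFun h0 0
      simp only [Pi.zero_apply] at this
      exact Complex.exp_ne_zero _ this
    · apply Differentiable.cexp
      apply Differentiable.const_mul
      apply Differentiable.fun_sum
      intro j _
      exact ((ContinuousLinearMap.proj j : (Fin k → ℂ) →L[ℂ] ℂ).differentiable).const_mul _
    · intro i t
      have hsum : ∑ j, (l j : ℂ) * ((t + (Pi.single i (1:ℂ) : Fin k → ℂ)) j)
          = (∑ j, (l j : ℂ) * t j) + l i := by
        simp only [Pi.add_apply, mul_add, Finset.sum_add_distrib, Pi.single_apply, mul_ite,
          mul_one, mul_zero, Finset.sum_ite_eq', Finset.mem_univ, if_true]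
      show Complex.exp (2 * (Real.pi:ℂ) * I * ∑ j, (l j : ℂ) * (t + (Pi.single i (1:ℂ) : Fin k → ℂ)) j) = _
      rw [hsum, mul_add, Complex.exp_add]
      have : Complex.exp (2 * (Real.pi:ℂ) * I * (l i : ℂ)) = 1 := by
        rw [show (2 * (Real.pi:ℂ) * I * (l i : ℂ)) = (l i : ℂ) * (2 * (Real.pi:ℂ) * I) by ring,
          Complex.exp_int_mul_two_pi_mul_I]
      rw [this, mul_one]
    · intro i t
      have hsum : ∑ j, (l j : ℂ) * ((t + (Pi.single i τ : Fin k → ℂ)) j)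
          = (∑ j, (l j : ℂ) * t j) + l i * τ := by
        simp only [Pi.add_apply, mul_add, Finset.sum_add_distrib, Pi.single_apply, mul_ite,
          mul_zero, Finset.sum_ite_eq', Finset.mem_univ, if_true]
      show Complex.exp (2 * (Real.pi:ℂ) * I * ∑ j, (l j : ℂ) * (t + (Pi.single i τ : Fin k → ℂ)) j) = _
      rw [hsum, mul_add, Complex.exp_add, mul_comm]
      congr 1
      rw [hlm i]
      rw [show (2 * (Real.pi:ℂ) * I * ((l i : ℂ) * τ + (m i : ℂ)))
          = 2 * (Real.pi:ℂ) * I * ((l i:ℂ) * τ) + (m i : ℂ) * (2 * (Real.pi:ℂ) * I) by ring,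
        Complex.exp_add, Complex.exp_int_mul_two_pi_mul_I, mul_one]

end
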